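/- Let I ⊆ ℤ, p ∈ [1,∞], and let A and (A_n)_{n∈ℕ} be bounded self-adjoint band operators on ℓ²(I) with A_n x → Ax for all finitely supported x. If some subsequence (A_{n_k}) is stable (all A_{n_k} invertible with sup_k ‖A_{n_k}^{-1}‖ < ∞), then A is invertible and ‖A^{-1}‖ ≤ sup_k ‖A_{n_k}^{-1}‖. -/

import Mathlib

open scoped ComplexConjugate InnerProductSpace
open ContinuousLinearMap

/-- If self-adjoint band operators `A_n` on `ℓ²(I)` converge to `A` pointwise on finitely
supported vectors and some subsequence is stable, then `A` is invertible and
`‖A⁻¹‖ ≤ sup_k ‖A_{n_k}⁻¹‖`. -/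
theorem stmt13 (I : Set ℤ)
    (A : lp (fun _ : I => ℂ) 2 →L[ℂ] lp (fun _ : I => ℂ) 2)
    (As : ℕ → (lp (fun _ : I => ℂ) 2 →L[ℂ] lp (fun _ : I => ℂ) 2))
    (hsa : IsSelfAdjoint A) (hsan : ∀ n, IsSelfAdjoint (As n))
    (w : ℕ)
    (hbandA : ∀ (x : lp (fun _ : I => ℂ) 2) (i : I),
      (∀ j : I, |(i : ℤ) - (j : ℤ)| ≤ (w : ℤ) → x j = 0) → A x i = 0)
    (hbandn : ∀ n, ∀ (x : lp (fun _ : I => ℂ) 2) (i : I),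
      (∀ j : I, |(i : ℤ) - (j : ℤ)| ≤ (w : ℤ) → x j = 0) → As n x i = 0)
    (hconv : ∀ x : lp (fun _ : I => ℂ) 2, {i : I | x i ≠ 0}.Finite →
      Filter.Tendsto (fun n => As n x) Filter.atTop (nhds (A x)))
    (nk : ℕ → ℕ) (hnk : StrictMono nk)
    (hinv : ∀ k, IsUnit (As (nk k)))
    (C : ℝ) (hC : ∀ k, ‖Ring.inverse (As (nk k))‖ ≤ C) :
    IsUnit A ∧ ‖Ring.inverse A‖ ≤ ⨆ k, ‖Ring.inverse (As (nk k))‖ := by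
  set H := lp (fun _ : I => ℂ) 2
  set c : ℝ := ⨆ k, ‖Ring.inverse (As (nk k))‖ with hc
  have hbdd : BddAbove (Set.range fun k => ‖Ring.inverse (As (nk k))‖) :=
    ⟨C, by rintro _ ⟨k, rfl⟩; exact hC k⟩
  have hc0 : 0 ≤ c := le_trans (norm_nonneg _) (le_ciSup hbdd 0)
  -- step 1: lower bound on finitely supported vectors
  have key1 : ∀ x : H, {i : I | x i ≠ 0}.Finite → ‖x‖ ≤ c * ‖A x‖ := by
    intro x hx
    have ht : Filter.Tendsto (fun k => As (nk k) x) Filter.atTop (nhds (A x)) :=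
      (hconv x hx).comp hnk.tendsto_atTop
    have ht' : Filter.Tendsto (fun k => c * ‖As (nk k) x‖) Filter.atTop (nhds (c * ‖A x‖)) :=
      (ht.norm).const_mul c
    refine ge_of_tendsto' ht' fun k => ?_
    have h1 : x = Ring.inverse (As (nk k)) (As (nk k) x) := by
      have := Ring.inverse_mul_cancel _ (hinv k)
      calc x = ((Ring.inverse (As (nk k)) * As (nk k)) : H →L[ℂ] H) x := by rw [this]; rfl
        _ = Ring.inverse (As (nk k)) (As (nk k) x) := rfl
    calc ‖x‖ = ‖Ring.inverse (As (nk k)) (As (nk k) x)‖ := by rw [← h1]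
      _ ≤ ‖Ring.inverse (As (nk k))‖ * ‖As (nk k) x‖ := le_opNorm _ _
      _ ≤ c * ‖As (nk k) x‖ :=
          mul_le_mul_of_nonneg_right (le_ciSup hbdd k) (norm_nonneg _)
  -- step 2: extend to all vectors by density
  have key : ∀ x : H, ‖x‖ ≤ c * ‖A x‖ := by
    intro x
    have hs : HasSum (fun i => lp.single 2 i (x i)) x := lp.hasSum_single (by norm_num) x
    have ht : Filter.Tendsto (fun s : Finset I => ∑ i ∈ s, lp.single 2 i (x i))
        Filter.atTop (nhds x) := hs
    have ht1 : Filter.Tendsto (fun s : Finset I => ‖∑ i ∈ s, lp.single 2 i (x i)‖)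
        Filter.atTop (nhds ‖x‖) := ht.norm
    have ht2 : Filter.Tendsto (fun s : Finset I => c * ‖A (∑ i ∈ s, lp.single 2 i (x i))‖)
        Filter.atTop (nhds (c * ‖A x‖)) := ((A.continuous.tendsto x).comp ht).norm.const_mul c
    refine le_of_tendsto_of_tendsto' ht1 ht2 fun s => key1 _ ?_
    refine Set.Finite.subset s.finite_toSet fun j hj => ?_
    by_contra hjs
    apply hj
    have : (∑ i ∈ s, lp.single 2 i (x i)) j = ∑ i ∈ s, (lp.single 2 i (x i) : ∀ i : I, ℂ) j := by
      rw [lp.coeFn_sum]; simp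
    rw [this]
    refine Finset.sum_eq_zero fun i hi => ?_
    exact lp.single_apply_ne 2 i _ (fun h => hjs (h ▸ hi))
  -- injectivity
  have hinj : Function.Injective A := by
    intro a b hab
    have : ‖a - b‖ ≤ c * ‖A (a - b)‖ := key _
    rw [map_sub, hab, sub_self, norm_zero, mul_zero] at this
    exact sub_eq_zero.mp (norm_le_zero_iff.mp this)
  have hker : LinearMap.ker (A : H →ₗ[ℂ] H) = ⊥ := LinearMap.ker_eq_bot.mpr hinj
  -- closed range
  have hanti : AntilipschitzWith c.toNNReal A := by
    refine A.antilipschitz_of_bound fun x => ?_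
    rw [Real.coe_toNNReal c hc0]; exact key x
  have hclosed : IsClosed (Set.range A) := hanti.isClosed_range A.uniformContinuous
  -- self-adjointness: inner products
  have hip : ∀ x y : H, ⟪A x, y⟫_ℂ = ⟪x, A y⟫_ℂ := by
    intro x y
    have h1 : ContinuousLinearMap.adjoint A = A := by
      rw [← ContinuousLinearMap.star_eq_adjoint]; exact hsa
    calc ⟪A x, y⟫_ℂ = (starRingEnd ℂ) ⟪y, A x⟫_ℂ := (inner_conj_symm _ _).symm
      _ = (starRingEnd ℂ) ⟪ContinuousLinearMap.adjoint A y, x⟫_ℂ := by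
          rw [ContinuousLinearMap.adjoint_inner_left]
      _ = (starRingEnd ℂ) ⟪A y, x⟫_ℂ := by rw [h1]
      _ = ⟪x, A y⟫_ℂ := inner_conj_symm _ _
  -- dense range
  have horth : (LinearMap.range (A : H →ₗ[ℂ] H))ᗮ = ⊥ := by
    rw [Submodule.eq_bot_iff]
    intro y hy
    have hAy : A y = 0 := by
      have h0 : ⟪A y, y⟫_ℂ = 0 :=
        (Submodule.mem_orthogonal _ y).mp hy (A y) (LinearMap.mem_range_self _ y)
      have h1 : ⟪A (A y), y⟫_ℂ = 0 :=
        (Submodule.mem_orthogonal _ y).mp hy (A (A y)) (LinearMap.mem_range_self _ _)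
      have h2 : ⟪A y, A y⟫_ℂ = 0 := by rw [← hip]; exact h1
      exact inner_self_eq_zero.mp h2
    have : A y = A 0 := by rw [hAy, map_zero]
    exact hinj this
  have hrange : LinearMap.range (A : H →ₗ[ℂ] H) = ⊤ := by
    have h1 : (LinearMap.range (A : H →ₗ[ℂ] H))ᗮᗮ = (LinearMap.range (A : H →ₗ[ℂ] H)).topologicalClosure :=
      Submodule.orthogonal_orthogonal_eq_closure _
    rw [horth, Submodule.bot_orthogonal_eq_top] at h1
    have h2 : (LinearMap.range (A : H →ₗ[ℂ] H)).topologicalClosure = LinearMap.range (A : H →ₗ[ℂ] H) := by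
      apply SetLike.ext'
      rw [Submodule.topologicalClosure_coe]
      have : (LinearMap.range (A : H →ₗ[ℂ] H) : Set H) = Set.range A := LinearMap.coe_range _
      rw [this, hclosed.closure_eq]
    rw [h2] at h1
    exact h1.symm
  have hunit : IsUnit A := ContinuousLinearMap.isUnit_iff_bijective.mpr
    ⟨hinj, LinearMap.range_eq_top.mp hrange⟩
  refine ⟨hunit, ?_⟩
  refine ContinuousLinearMap.opNorm_le_bound _ hc0 fun y => ?_
  have hAy : A (Ring.inverse A y) = y := by
    have := Ring.mul_inverse_cancel _ hunit
    calc A (Ring.inverse A y) = ((A * Ring.inverse A) : H →L[ℂ] H) y := rfl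
      _ = y := by rw [this]; rfl
  calc ‖Ring.inverse A y‖ ≤ c * ‖A (Ring.inverse A y)‖ := key _
    _ = c * ‖y‖ := by rw [hAy]
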